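/- The tree-Wasserstein distance W_{d_T} is a negative definite kernel on the set of probability measures supported on the nodes of a fixed rooted tree T with non-negative edge lengths: for any n ≥ 2, measures μ_1,…,μ_n, and reals c_1,…,c_n with Σ c_i = 0, one has Σ_{i,j} c_i c_j W_{d_T}(μ_i, μ_j) ≤ 0. -/

import Mathlib

open Finset

structure WTree (V : Type) where
  root : V
  parent : V → V
  parent_root : parent root = root
  reaches_root : ∀ v : V, ∃ k : ℕ, parent^[k] v = root
  wt : V → ℝ
  wt_nonneg : ∀ v, 0 ≤ wt v

namespace WTree

open Classical

variable {V : Type} [Fintype V]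

def isAnc (T : WTree V) (u x : V) : Prop := ∃ k : ℕ, T.parent^[k] x = u

noncomputable def pathEdges (T : WTree V) (x : V) : Finset V :=
  Finset.univ.filter (fun u => u ≠ T.root ∧ T.isAnc u x)

noncomputable def treeDist (T : WTree V) (x z : V) : ℝ :=
  ∑ u ∈ ((T.pathEdges x \ T.pathEdges z) ∪ (T.pathEdges z \ T.pathEdges x)), T.wt u

noncomputable def subtreeMass (T : WTree V) (μ : V → ℝ) (u : V) : ℝ :=
  ∑ x ∈ Finset.univ.filter (fun x => T.isAnc u x), μ x

noncomputable def TW (T : WTree V) (μ ν : V → ℝ) : ℝ :=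
  ∑ u ∈ Finset.univ.filter (fun u => u ≠ T.root),
    T.wt u * |T.subtreeMass μ u - T.subtreeMass ν u|

end WTree

open Classical

/-- A symmetric kernel `k` is negative definite. -/
def NegDefKernel {X : Type} (k : X → X → ℝ) : Prop :=
  ∀ (n : ℕ), 2 ≤ n → ∀ (x : Fin n → X) (c : Fin n → ℝ),
    (∑ i, c i) = 0 → ∑ i, ∑ j, c i * c j * k (x i) (x j) ≤ 0

section AuxNegDef
open MeasureTheory

noncomputable def step (a t : ℝ) : ℝ := if a ≤ t then 1 else 0

lemma step_sq_eq (a b : ℝ) :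
    (fun t => (step a t - step b t)^2)
      = Set.indicator (Set.Ico (min a b) (max a b)) (fun _ => (1:ℝ)) := by
  funext t
  simp only [step, Set.indicator, Set.mem_Ico, min_le_iff, lt_max_iff]
  by_cases h1 : a ≤ t <;> by_cases h2 : b ≤ t
  · rw [if_pos h1, if_pos h2, if_neg]
    · ring
    · rintro ⟨-, h | h⟩ <;> linarith
  · rw [if_pos h1, if_neg h2, if_pos ⟨Or.inl h1, Or.inr (not_le.mp h2)⟩]; norm_num
  · rw [if_neg h1, if_pos h2, if_pos ⟨Or.inr h2, Or.inl (not_le.mp h1)⟩]; norm_num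
  · rw [if_neg h1, if_neg h2, if_neg]
    · ring
    · rintro ⟨h | h, -⟩ <;> linarith

lemma integrable_step_sq (a b : ℝ) :
    Integrable (fun t => (step a t - step b t)^2) := by
  rw [step_sq_eq]
  exact ((integrableOn_const_iff (C := (1:ℝ))).mpr (Or.inr (by simp [Real.volume_Ico]))).integrable_indicator measurableSet_Ico

lemma integral_step_sq (a b : ℝ) :
    ∫ t, (step a t - step b t)^2 = |a - b| := by
  rw [step_sq_eq, integral_indicator measurableSet_Ico]
  simp [Real.volume_Ico]
  rcases le_total a b with h | h
  · rw [abs_sub_comm, abs_of_nonneg (by linarith), max_eq_right h, min_eq_left h]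
  · rw [abs_of_nonneg (by linarith), max_eq_left h, min_eq_right h]

lemma sum_sq_identity {n : ℕ} (c x : Fin n → ℝ) (hc : ∑ i, c i = 0) :
    ∑ i, ∑ j, c i * c j * (x i - x j)^2 = -2 * (∑ i, c i * x i)^2 := by
  have h1 : ∀ i j, c i * c j * (x i - x j)^2
      = (c i * x i ^ 2) * c j - 2 * ((c i * x i) * (c j * x j)) + c i * (c j * x j ^ 2) := by
    intro i j; ring
  simp only [h1, Finset.sum_add_distrib, Finset.sum_sub_distrib, ← Finset.mul_sum,
    ← Finset.sum_mul, hc, mul_zero, zero_mul, Finset.sum_const_zero]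
  ring

lemma abs_negdef {n : ℕ} (a c : Fin n → ℝ) (hc : ∑ i, c i = 0) :
    ∑ i, ∑ j, c i * c j * |a i - a j| ≤ 0 := by
  have key : ∑ i, ∑ j, c i * c j * |a i - a j|
      = ∫ t, ∑ i, ∑ j, c i * c j * (step (a i) t - step (a j) t)^2 := by
    rw [MeasureTheory.integral_finset_sum _ (fun i _ => MeasureTheory.integrable_finset_sum _
      (fun j _ => ((integrable_step_sq (a i) (a j)).const_mul _)))]
    refine Finset.sum_congr rfl fun i _ => ?_
    rw [MeasureTheory.integral_finset_sum _
      (fun j _ => ((integrable_step_sq (a i) (a j)).const_mul _))]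
    refine Finset.sum_congr rfl fun j _ => ?_
    rw [MeasureTheory.integral_const_mul, integral_step_sq]
  rw [key]
  apply MeasureTheory.integral_nonpos
  intro t
  have := sum_sq_identity c (fun i => step (a i) t) hc
  simp only [Pi.zero_apply]
  rw [this]
  nlinarith [sq_nonneg (∑ i, c i * step (a i) t)]

end AuxNegDef

lemma sum_swap3 {α β γ : Type*} (s : Finset α) (t : Finset β) (r : Finset γ)
    (g : α → β → γ → ℝ) :
    ∑ i ∈ s, ∑ j ∈ t, ∑ u ∈ r, g i j u = ∑ u ∈ r, ∑ i ∈ s, ∑ j ∈ t, g i j u :=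
  (Finset.sum_congr rfl fun i _ => Finset.sum_comm).trans (Finset.sum_comm)

/-- The tree-Wasserstein distance is a negative definite kernel on the
set of probability measures supported on the nodes of a fixed rooted tree. -/
theorem tree_wasserstein_negative_definite {V : Type} [Fintype V] (T : WTree V) :
    NegDefKernel (fun (μ ν : {p : V → ℝ // (∀ x, 0 ≤ p x) ∧ ∑ x, p x = 1}) =>
      T.TW μ.1 ν.1) := by
  intro n hn x c hc
  classical
  simp only []
  set E := Finset.univ.filter (fun u => u ≠ T.root) with hE
  set m : Fin n → V → ℝ := fun i u => T.subtreeMass (x i).1 u with hm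
  have key : ∑ i, ∑ j, c i * c j * T.TW (x i).1 (x j).1
      = ∑ u ∈ E, T.wt u * ∑ i, ∑ j, c i * c j * |m i u - m j u| := by
    simp only [WTree.TW, Finset.mul_sum]
    rw [sum_swap3]
    refine Finset.sum_congr rfl fun u _ => ?_
    refine Finset.sum_congr rfl fun i _ => ?_
    refine Finset.sum_congr rfl fun j _ => ?_
    ring
  rw [key]
  apply Finset.sum_nonpos
  intro u _
  exact mul_nonpos_of_nonneg_of_nonpos (T.wt_nonneg u) (abs_negdef (fun i => m i u) c hc)
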